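/- Under the PC-lite dynamics, let B ⊆ V with |B| > 1 be a connected subset of agents with bubble number γ_B > 3 + 2√2, and let α₁ < α₂ be the two positive solutions of (1+α)/(α(1−α)) = γ_B. If for some time t₀ we have x_i(t₀) < −α₁ for all i ∈ B, then limsup_{t→∞} x_i(t) ≤ −α₂ for all i ∈ B. -/

import Mathlib

open Filter Finset

lemma pc_aux_maintain {γ α β W y : ℝ} (hγ0 : 0 < γ) (hα0 : 0 ≤ α)
    (hW0 : 0 ≤ W) (hW1 : W ≤ 1) (hγα : γ * α + 1 ≤ γ)
    (hδ : 0 ≤ γ * α * (1 - β) - (1 + β)) (hy : y ≤ -β) :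
    y - W / γ * (γ * α * (1 + y) - (1 - y)) ≤ -β := by
  have key : y - W / γ * (γ * α * (1 + y) - (1 - y))
      = (γ * y - W * (γ * α * (1 + y) - (1 - y))) / γ := by
    field_simp
  rw [key, div_le_iff₀ hγ0]
  have h1 : W * (γ * α + 1) ≤ γ := by
    nlinarith [mul_le_mul_of_nonneg_right hW1 (show (0:ℝ) ≤ γ * α + 1 by positivity)]
  nlinarith [mul_nonneg (sub_nonneg.mpr h1) (show (0:ℝ) ≤ -β - y by linarith),
    mul_nonneg hW0 hδ]

lemma pc_aux_decrease {γ α β W y : ℝ} (hγ0 : 0 < γ) (hα0 : 0 ≤ α) (hW0 : 0 ≤ W)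
    (hy : -β ≤ y) :
    y - W / γ * (γ * α * (1 + y) - (1 - y)) ≤ y - W / γ * (γ * α * (1 - β) - (1 + β)) := by
  have h : (0:ℝ) ≤ W / γ := by positivity
  have h2 : γ * α * (1 - β) - (1 + β) ≤ γ * α * (1 + y) - (1 - y) := by
    nlinarith [mul_nonneg (mul_nonneg hγ0.le hα0) (show (0:ℝ) ≤ y + β by linarith)]
  nlinarith [mul_le_mul_of_nonneg_left h2 h]

set_option maxHeartbeats 2000000 in
theorem pc_lite_bubble_polarization_neg {n : ℕ} (hn : 2 ≤ n)
    (x : ℕ → Fin n → ℝ) (w : ℕ → Fin n → Fin n → ℝ)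
    (hx : ∀ t i, x t i ∈ Set.Icc (-1 : ℝ) 1)
    (hw0 : ∀ t i j, 0 ≤ w t i j)
    (hwdiag : ∀ t i, w t i i = 0)
    (hwsum : ∀ t i, ∑ j, w t i j ≤ 1)
    (hdyn : ∀ t i, x (t + 1) i =
      x t i + ∑ j ∈ univ.erase i, w t i j * |x t j| * (Real.sign (x t j) - x t i))
    (B : Finset (Fin n)) (hBcard : 1 < B.card)
    (hconn : ∀ i ∈ B,
      Tendsto (fun T => ∑ t ∈ Finset.range T, ∑ j ∈ B, w t i j) atTop atTop)
    (γ : ℝ) (hγ : 3 + 2 * Real.sqrt 2 < γ)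
    (hbubble : ∀ t, ∀ i ∈ B, γ * ∑ j ∈ Bᶜ, w t i j ≤ ∑ j ∈ B, w t i j)
    (α₁ α₂ : ℝ) (hα₁pos : 0 < α₁) (hα₁α₂ : α₁ < α₂)
    (hsol₁ : (1 + α₁) / (α₁ * (1 - α₁)) = γ)
    (hsol₂ : (1 + α₂) / (α₂ * (1 - α₂)) = γ)
    (t₀ : ℕ) (hinit : ∀ i ∈ B, x t₀ i < -α₁) :
    ∀ i ∈ B, Filter.limsup (fun t => x t i) atTop ≤ -α₂ := by
  -- basic numeric facts
  have hγ0 : 0 < γ := by nlinarith [Real.sqrt_nonneg 2]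
  have hα₂pos : 0 < α₂ := lt_trans hα₁pos hα₁α₂
  have hlt1 : ∀ a : ℝ, 0 < a → (1 + a) / (a * (1 - a)) = γ → a < 1 := by
    intro a ha hsol
    by_contra h
    push_neg at h
    have hd : a * (1 - a) ≤ 0 := mul_nonpos_of_nonneg_of_nonpos ha.le (by linarith)
    have h2 : (1 + a) / (a * (1 - a)) ≤ 0 :=
      div_nonpos_of_nonneg_of_nonpos (by linarith) hd
    rw [hsol] at h2; linarith
  have hα₁1 : α₁ < 1 := hlt1 α₁ hα₁pos hsol₁
  have hα₂1 : α₂ < 1 := hlt1 α₂ hα₂pos hsol₂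
  have e₁ : 1 + α₁ = γ * (α₁ * (1 - α₁)) := by
    rw [← hsol₁, div_mul_cancel₀]
    exact ne_of_gt (mul_pos hα₁pos (by linarith))
  have e₂ : 1 + α₂ = γ * (α₂ * (1 - α₂)) := by
    rw [← hsol₂, div_mul_cancel₀]
    exact ne_of_gt (mul_pos hα₂pos (by linarith))
  have hsumv : γ * (α₁ + α₂) = γ - 1 := by
    have hne : α₁ - α₂ ≠ 0 := sub_ne_zero.mpr hα₁α₂.ne
    have h : (α₁ - α₂) * (γ * (α₁ + α₂) - (γ - 1)) = 0 := by linear_combination e₁ - e₂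
    rcases mul_eq_zero.mp h with h' | h'
    · exact absurd h' hne
    · linarith
  have hprodv : γ * (α₁ * α₂) = 1 := by linear_combination α₁ * hsumv - e₁
  have hquad : ∀ b : ℝ, γ * b * (1 - b) - (1 + b) = γ * (b - α₁) * (α₂ - b) := by
    intro b; linear_combination (-b) * hsumv + hprodv
  have hγα₂ : γ * α₂ + 1 ≤ γ := by
    have h1 : α₂ * (γ * (1 - α₂)) = 1 + α₂ := by linear_combination -e₂
    nlinarith [h1, hα₂pos, hα₂1]
  -- weight facts
  set W : ℕ → Fin n → ℝ := fun t i => ∑ j ∈ B, w t i j with hWdef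
  have hW0 : ∀ t i, 0 ≤ W t i := fun t i => Finset.sum_nonneg fun j _ => hw0 t i j
  have hW1 : ∀ t i, W t i ≤ 1 := fun t i =>
    le_trans (Finset.sum_le_sum_of_subset_of_nonneg (Finset.subset_univ B)
      fun j _ _ => hw0 t i j) (hwsum t i)
  -- one-step bound
  have stepA : ∀ α : ℝ, 0 < α → α ≤ 1 → ∀ t, (∀ j ∈ B, x t j ≤ -α) → ∀ i ∈ B,
      x (t + 1) i ≤ x t i - W t i / γ * (γ * α * (1 + x t i) - (1 - x t i)) := by
    intro α hα0 hα1 t hall i hi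
    have hx_i := hx t i
    have hsplit : (univ.erase i) = (B.erase i) ∪ Bᶜ := by
      ext j
      simp only [Finset.mem_erase, Finset.mem_union, Finset.mem_compl, Finset.mem_univ,
        and_true]
      constructor
      · intro hj
        by_cases hjB : j ∈ B
        · exact Or.inl ⟨hj, hjB⟩
        · exact Or.inr hjB
      · rintro (⟨hj, _⟩ | hj)
        · exact hj
        · intro h; exact hj (h ▸ hi)
    have hdisj : Disjoint (B.erase i) Bᶜ :=
      Disjoint.mono_left (Finset.erase_subset i B) disjoint_compl_right
    rw [hdyn t i, hsplit, Finset.sum_union hdisj]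
    have h1 : ∑ j ∈ B.erase i, w t i j * |x t j| * (Real.sign (x t j) - x t i)
        ≤ ∑ j ∈ B.erase i, w t i j * (α * (-1 - x t i)) := by
      apply Finset.sum_le_sum
      intro j hj
      have hjB := Finset.mem_of_mem_erase hj
      have hxj : x t j ≤ -α := hall j hjB
      have hxjneg : x t j < 0 := lt_of_le_of_lt hxj (by linarith)
      rw [Real.sign_of_neg hxjneg, abs_of_neg hxjneg]
      have h2 : -x t j * (-1 - x t i) ≤ α * (-1 - x t i) :=
        mul_le_mul_of_nonpos_right (by linarith) (by linarith [hx_i.1])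
      calc w t i j * -x t j * (-1 - x t i) = w t i j * (-x t j * (-1 - x t i)) := by ring
        _ ≤ w t i j * (α * (-1 - x t i)) := mul_le_mul_of_nonneg_left h2 (hw0 t i j)
    have h1' : ∑ j ∈ B.erase i, w t i j * (α * (-1 - x t i))
        = W t i * (α * (-1 - x t i)) := by
      rw [← Finset.sum_mul, Finset.sum_erase _ (hwdiag t i)]
    have h2 : ∑ j ∈ Bᶜ, w t i j * |x t j| * (Real.sign (x t j) - x t i)
        ≤ ∑ j ∈ Bᶜ, w t i j * (1 - x t i) := by
      apply Finset.sum_le_sum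
      intro j _
      have hxj := hx t j
      have habs : |x t j| ≤ 1 := abs_le.mpr ⟨hxj.1, hxj.2⟩
      have habs0 : (0:ℝ) ≤ |x t j| := abs_nonneg _
      have hsgn : Real.sign (x t j) ≤ 1 := by
        rcases lt_trichotomy (x t j) 0 with h | h | h
        · rw [Real.sign_of_neg h]; norm_num
        · rw [h, Real.sign_zero]; norm_num
        · rw [Real.sign_of_pos h]
      have key : |x t j| * (Real.sign (x t j) - x t i) ≤ 1 - x t i := by
        rcases le_or_gt (Real.sign (x t j) - x t i) 0 with h | h
        · have := mul_nonpos_of_nonneg_of_nonpos habs0 h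
          linarith [hx_i.2]
        · calc |x t j| * (Real.sign (x t j) - x t i)
              ≤ 1 * (Real.sign (x t j) - x t i) := mul_le_mul_of_nonneg_right habs h.le
            _ ≤ 1 - x t i := by linarith
      calc w t i j * |x t j| * (Real.sign (x t j) - x t i)
          = w t i j * (|x t j| * (Real.sign (x t j) - x t i)) := by ring
        _ ≤ w t i j * (1 - x t i) := mul_le_mul_of_nonneg_left key (hw0 t i j)
    have h2' : ∑ j ∈ Bᶜ, w t i j * (1 - x t i)
        = (∑ j ∈ Bᶜ, w t i j) * (1 - x t i) := (Finset.sum_mul _ _ _).symm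
    have hO : (∑ j ∈ Bᶜ, w t i j) * (1 - x t i) ≤ W t i / γ * (1 - x t i) := by
      apply mul_le_mul_of_nonneg_right _ (by linarith [hx_i.2])
      rw [le_div_iff₀ hγ0]
      nlinarith [hbubble t i hi]
    have final : x t i + (W t i * (α * (-1 - x t i)) + W t i / γ * (1 - x t i))
        = x t i - W t i / γ * (γ * α * (1 + x t i) - (1 - x t i)) := by
      field_simp; ring
    linarith [h1, h2, h1' ▸ h1, hO]
  -- maintenance step
  have maintain : ∀ α β : ℝ, α₁ ≤ α → α ≤ α₂ → 0 ≤ γ * α * (1 - β) - (1 + β) →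
      ∀ t, (∀ j ∈ B, x t j ≤ -α) → ∀ i ∈ B, x t i ≤ -β → x (t + 1) i ≤ -β := by
    intro α β hαl hαu hδ t hall i hi hib
    have hα0 : 0 < α := lt_of_lt_of_le hα₁pos hαl
    have hα1 : α ≤ 1 := hαu.trans hα₂1.le
    have hA := stepA α hα0 hα1 t hall i hi
    have hγα : γ * α + 1 ≤ γ := by
      have := mul_le_mul_of_nonneg_left hαu hγ0.le
      linarith [hγα₂]
    exact le_trans hA (pc_aux_maintain hγ0 hα0.le (hW0 t i) (hW1 t i) hγα hδ hib)
  -- decrease step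
  have decrease : ∀ α β : ℝ, 0 < α → α ≤ 1 → ∀ t, (∀ j ∈ B, x t j ≤ -α) → ∀ i ∈ B,
      -β ≤ x t i → x (t + 1) i ≤ x t i - W t i / γ * (γ * α * (1 - β) - (1 + β)) := by
    intro α β hα0 hα1 t hall i hi hib
    exact le_trans (stepA α hα0 hα1 t hall i hi)
      (pc_aux_decrease hγ0 hα0.le (hW0 t i) hib)
  -- invariance from t₀
  have hinv : ∀ α : ℝ, α₁ ≤ α → α ≤ α₂ → (∀ j ∈ B, x t₀ j ≤ -α) →
      ∀ t, t₀ ≤ t → ∀ j ∈ B, x t j ≤ -α := by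
    intro α hl hu h0
    have hδ : 0 ≤ γ * α * (1 - α) - (1 + α) := by
      rw [hquad α]
      exact mul_nonneg (mul_nonneg hγ0.le (by linarith)) (by linarith)
    intro t
    induction t with
    | zero =>
      intro ht
      have h : t₀ = 0 := Nat.le_zero.mp ht
      exact h ▸ h0
    | succ t ih =>
      intro ht
      rcases Nat.lt_or_ge t₀ (t + 1) with h | h
      · have ht' : t₀ ≤ t := Nat.lt_succ_iff.mp h
        intro j hj
        exact maintain α α hl hu hδ t (ih ht') j hj (ih ht' j hj)
      · have h' : t₀ = t + 1 := le_antisymm ht h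
        exact h' ▸ h0
  -- per-agent eventual bound
  have perAgent : ∀ α β : ℝ, α₁ ≤ α → α ≤ α₂ → 0 < γ * α * (1 - β) - (1 + β) →
      ∀ s : ℕ, (∀ t, s ≤ t → ∀ j ∈ B, x t j ≤ -α) → ∀ i ∈ B,
      ∀ᶠ t in atTop, x t i ≤ -β := by
    intro α β hαl hαu hδ s hall i hi
    have hα0 : 0 < α := lt_of_lt_of_le hα₁pos hαl
    have hα1 : α ≤ 1 := hαu.trans hα₂1.le
    set δ := γ * α * (1 - β) - (1 + β) with hδdef
    have phase1 : ∃ t₁, s ≤ t₁ ∧ x t₁ i ≤ -β := by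
      by_contra hcon
      push_neg at hcon
      have hdec : ∀ m : ℕ, x (s + m) i ≤ x s i - δ / γ * ∑ k ∈ range m, W (s + k) i := by
        intro m
        induction m with
        | zero => simp
        | succ m ih =>
          have hstep := decrease α β hα0 hα1 (s + m) (hall _ (Nat.le_add_right s m)) i hi
            (le_of_lt (hcon (s + m) (Nat.le_add_right s m)))
          have heq : W (s + m) i / γ * δ = δ / γ * W (s + m) i := by ring
          rw [Finset.sum_range_succ, mul_add]
          show x ((s + m) + 1) i ≤ _
          linarith [hstep, ih]
      have hdiv := hconn i hi
      have hδγ : 0 < δ / γ := div_pos hδ hγ0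
      obtain ⟨T, hTs, hT⟩ :
          ∃ T, s ≤ T ∧ (∑ t ∈ range s, W t i) + (γ / δ * (x s i + 1) + 1)
            ≤ ∑ t ∈ range T, W t i := by
        have h1 := (eventually_ge_atTop s).and
          (hdiv.eventually_ge_atTop ((∑ t ∈ range s, W t i) + (γ / δ * (x s i + 1) + 1)))
        obtain ⟨T, hT1, hT2⟩ := h1.exists
        exact ⟨T, hT1, hT2⟩
      set m := T - s with hm
      have hTm : T = s + m := by omega
      have hsum : ∑ t ∈ range T, W t i
          = (∑ t ∈ range s, W t i) + ∑ k ∈ range m, W (s + k) i := by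
        rw [hTm, Finset.sum_range_add]
      have hS : γ / δ * (x s i + 1) + 1 ≤ ∑ k ∈ range m, W (s + k) i := by
        rw [hsum] at hT; linarith
      have hkey : δ / γ * (γ / δ * (x s i + 1) + 1) = (x s i + 1) + δ / γ := by
        field_simp
      have hmul := mul_le_mul_of_nonneg_left hS hδγ.le
      have hbd := hdec m
      have hxT := (hx (s + m) i).1
      have hfinal : x (s + m) i ≤ -1 - δ / γ := by
        calc x (s + m) i ≤ x s i - δ / γ * ∑ k ∈ range m, W (s + k) i := hbd
          _ ≤ x s i - δ / γ * (γ / δ * (x s i + 1) + 1) := by linarith [hmul]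
          _ = -1 - δ / γ := by rw [hkey]; ring
      linarith
    obtain ⟨t₁, ht₁s, ht₁⟩ := phase1
    have hmaint : ∀ t, t₁ ≤ t → x t i ≤ -β := by
      intro t
      induction t with
      | zero =>
        intro ht
        have h : t₁ = 0 := Nat.le_zero.mp ht
        exact h ▸ ht₁
      | succ t ih =>
        intro ht
        rcases Nat.lt_or_ge t₁ (t + 1) with h | h
        · have ht' : t₁ ≤ t := Nat.lt_succ_iff.mp h
          exact maintain α β hαl hαu hδ.le t (hall t (le_trans ht₁s ht')) i hi (ih ht')
        · have h' : t₁ = t + 1 := le_antisymm ht h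
          exact h' ▸ ht₁
    exact eventually_atTop.mpr ⟨t₁, hmaint⟩
  -- the "eventually all of B below -b" predicate and bootstrap
  have hstepEv : ∀ b b' : ℝ, α₁ ≤ b → b ≤ α₂ → 0 < γ * b * (1 - b') - (1 + b') →
      (∀ᶠ t in atTop, ∀ j ∈ B, x t j ≤ -b) → (∀ᶠ t in atTop, ∀ j ∈ B, x t j ≤ -b') := by
    intro b b' hl hu hδ hEv
    rw [Filter.eventually_all_finset]
    intro i hi
    obtain ⟨s, hs⟩ := eventually_atTop.mp hEv
    exact perAgent b b' hl hu hδ s hs i hi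
  -- base level
  have hBne : B.Nonempty := Finset.card_pos.mp (by omega)
  obtain ⟨j₀, hj₀B, hj₀max⟩ := B.exists_max_image (fun j => x t₀ j) hBne
  set α0 := min α₂ (-(x t₀ j₀)) with hα0def
  have hα0l : α₁ < α0 := lt_min hα₁α₂ (by linarith [hinit j₀ hj₀B])
  have hα0u : α0 ≤ α₂ := min_le_left _ _
  have hbase : ∀ j ∈ B, x t₀ j ≤ -α0 := by
    intro j hj
    have h1 := hj₀max j hj
    have h2 : α0 ≤ -(x t₀ j₀) := min_le_right _ _
    linarith
  have hEv0 : ∀ᶠ t in atTop, ∀ j ∈ B, x t j ≤ -α0 :=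
    eventually_atTop.mpr ⟨t₀, fun t ht => hinv α0 hα0l.le hα0u hbase t ht⟩
  -- conclude
  intro i hi
  have hcb : IsCoboundedUnder (· ≤ ·) atTop (fun t => x t i) := by
    apply Filter.IsBoundedUnder.isCoboundedUnder_le
    exact ⟨-1, eventually_map.mpr (Eventually.of_forall fun t => (hx t i).1)⟩
  have hlim : ∀ ε : ℝ, 0 < ε → limsup (fun t => x t i) atTop ≤ -α₂ + ε := by
    intro ε hε
    rcases le_or_gt (α₂ - ε) α0 with hcase | hcase
    · apply Filter.limsup_le_of_le hcb
      filter_upwards [hEv0] with t ht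
      have := ht i hi
      linarith
    · -- bootstrap induction
      set Δ := γ * (α0 - α₁) * ε / (2 * (γ + 1)) with hΔdef
      have hΔpos : 0 < Δ := by
        apply div_pos
        · exact mul_pos (mul_pos hγ0 (by linarith)) hε
        · linarith
      have hind : ∀ k : ℕ, ∃ b, α0 ≤ b ∧ b ≤ α₂ - ε ∧
          min (α₂ - ε) (α0 + k * Δ) ≤ b ∧ (∀ᶠ t in atTop, ∀ j ∈ B, x t j ≤ -b) := by
        intro k
        induction k with
        | zero =>
          exact ⟨α0, le_refl _, hcase.le, by simpa using min_le_right _ _, hEv0⟩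
        | succ k ih =>
          obtain ⟨b, hbl, hbu, hbmin, hbEv⟩ := ih
          rcases le_or_gt (α₂ - ε) b with hb2 | hb2
          · refine ⟨b, hbl, hbu, le_trans (min_le_left _ _) hb2, hbEv⟩
          · have hkΔ : α0 + k * Δ ≤ b := by
              rcases min_cases (α₂ - ε) (α0 + k * Δ) with ⟨heq, hle⟩ | ⟨heq, hle⟩
              · linarith [hbmin, heq ▸ hbmin]
              · linarith [heq ▸ hbmin]
            set b' := min (α₂ - ε) (b + Δ) with hb'def
            have hb'l : α0 ≤ b' := le_min hcase.le (by linarith)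
            have hb'u : b' ≤ α₂ - ε := min_le_left _ _
            have hb'min : min (α₂ - ε) (α0 + (k + 1 : ℕ) * Δ) ≤ b' := by
              have h1 : α0 + (k + 1 : ℕ) * Δ ≤ b + Δ := by
                push_cast
                push_cast at hkΔ
                linarith
              exact min_le_min (le_refl _) h1
            have hbb' : b ≤ b' := le_min hb2.le (by linarith)
            have hδ' : 0 < γ * b * (1 - b') - (1 + b') := by
              have hf1 : γ * b * (1 - b) - (1 + b) = γ * (b - α₁) * (α₂ - b) := hquad b
              have hf2 : γ * (α0 - α₁) * ε ≤ γ * (b - α₁) * (α₂ - b) := by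
                have := mul_le_mul (by linarith : α0 - α₁ ≤ b - α₁)
                  (by linarith : ε ≤ α₂ - b) hε.le (by linarith : (0:ℝ) ≤ b - α₁)
                nlinarith [this, hγ0]
              have hb1 : b ≤ 1 := by linarith
              have hf3 : (γ * b + 1) * (b' - b) ≤ (γ + 1) * Δ := by
                apply mul_le_mul
                · nlinarith [hγ0]
                · have := min_le_right (α₂ - ε) (b + Δ)
                  linarith
                · linarith
                · linarith
              have hf4 : (γ + 1) * Δ = γ * (α0 - α₁) * ε / 2 := by
                rw [hΔdef]
                field_simp
              have hexp : γ * b * (1 - b') - (1 + b')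
                  = (γ * b * (1 - b) - (1 + b)) - (γ * b + 1) * (b' - b) := by ring
              rw [hexp, hf1]
              have : γ * (α0 - α₁) * ε / 2 < γ * (α0 - α₁) * ε := by
                have : 0 < γ * (α0 - α₁) * ε := mul_pos (mul_pos hγ0 (by linarith)) hε
                linarith
              linarith
            exact ⟨b', hb'l, hb'u, hb'min, hstepEv b b' (by linarith) (by linarith) hδ' hbEv⟩
      obtain ⟨k, hk⟩ := exists_nat_ge ((α₂ - ε - α0) / Δ)
      have hk' : α₂ - ε - α0 ≤ k * Δ := by
        rw [div_le_iff₀ hΔpos] at hk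
        linarith
      obtain ⟨b, hbl, hbu, hbmin, hbEv⟩ := hind k
      have hble : α₂ - ε ≤ b := by
        have : min (α₂ - ε) (α0 + k * Δ) = α₂ - ε := min_eq_left (by linarith)
        linarith [this ▸ hbmin]
      apply Filter.limsup_le_of_le hcb
      filter_upwards [hbEv] with t ht
      have := ht i hi
      linarith
  have : limsup (fun t => x t i) atTop ≤ -α₂ := by
    apply le_of_forall_pos_le_add
    intro ε hε
    have := hlim ε hε
    linarith
  exact this
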